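/- Suppose a group G acts by isometries on an ℝ-tree Γ and some element of G acts as a hyperbolic isometry. Let Γ₋ be the intersection of all connected subsets of Γ containing the axis of every hyperbolic element of G. Then Γ₋ is the unique minimal G-invariant subtree of Γ: it is a G-invariant ℝ-tree and is contained in every G-invariant subtree of Γ. -/

import Mathlib

open Set Filter Metric

section Common

variable {H : Type*} [MetricSpace H]

/-- `γ` parametrizes a geodesic from `a` to `b` by arclength on `[0, dist a b]`. -/
def IsGeodesicSegment (γ : ℝ → H) (a b : H) : Prop :=
  γ 0 = a ∧ γ (dist a b) = b ∧
    ∀ s ∈ Set.Icc (0:ℝ) (dist a b), ∀ t ∈ Set.Icc (0:ℝ) (dist a b),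
      dist (γ s) (γ t) = |s - t|

/-- A geodesic space: every pair of points is joined by a geodesic. -/
def GeodesicSpace (H : Type*) [MetricSpace H] : Prop :=
  ∀ a b : H, ∃ γ : ℝ → H, IsGeodesicSegment γ a b

/-- The image of a geodesic segment from `a` to `b`. -/
def segImage (γ : ℝ → H) (a b : H) : Set H :=
  γ '' Set.Icc 0 (dist a b)

/-- A space has `Δ`-thin triangles if each side of every geodesic triangle is contained
in the `Δ`-neighborhood of the union of the other two sides. -/
def ThinTriangles (H : Type*) [MetricSpace H] (Δ : ℝ) : Prop :=
  ∀ a b c : H, ∀ γab γbc γca : ℝ → H,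
    IsGeodesicSegment γab a b → IsGeodesicSegment γbc b c → IsGeodesicSegment γca c a →
      ∀ x ∈ segImage γab a b, ∃ y ∈ segImage γbc b c ∪ segImage γca c a, dist x y ≤ Δ

/-- An arc from `a` to `b`, parametrized (injectively and continuously) by `[0,1]`. -/
def IsArcParam (α : ℝ → H) (a b : H) : Prop :=
  ContinuousOn α (Set.Icc 0 1) ∧ Set.InjOn α (Set.Icc 0 1) ∧ α 0 = a ∧ α 1 = b

/-- An `ℝ`-tree: a metric space in which every pair of points is joined by a geodesic
(so it is a path-metric space and arcs are isometric to intervals of `ℝ`) and in which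
the arc joining two points is unique. -/
def IsRTree (X : Type*) [MetricSpace X] : Prop :=
  (∀ a b : X, ∃ γ : ℝ → X, IsGeodesicSegment γ a b) ∧
  ∀ a b : X, ∀ α β : ℝ → X, IsArcParam α a b → IsArcParam β a b →
    α '' Set.Icc 0 1 = β '' Set.Icc 0 1

/-- The translation length of an isometry. -/
noncomputable def translationLength {X : Type*} [MetricSpace X] (τ : X ≃ᵢ X) : ℝ :=
  ⨅ x : X, dist x (τ x)

/-- The core of an isometry of an `ℝ`-tree: points moved the minimal distance. -/
def isomCore {X : Type*} [MetricSpace X] (τ : X ≃ᵢ X) : Set X :=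
  {x : X | dist x (τ x) = translationLength τ}

/-- An elliptic isometry: one having a fixed point. -/
def IsElliptic {X : Type*} [MetricSpace X] (τ : X ≃ᵢ X) : Prop :=
  ∃ x, τ x = x

/-- A hyperbolic isometry of an `ℝ`-tree: positive translation length, with core
isometric to the real line (its axis). -/
def IsHyperbolicIsom {X : Type*} [MetricSpace X] (τ : X ≃ᵢ X) : Prop :=
  0 < translationLength τ ∧
    ∃ e : ℝ → X, (∀ s t : ℝ, dist (e s) (e t) = |s - t|) ∧ Set.range e = isomCore τ

/-- A metric simplicial tree: an `ℝ`-tree together with a closed discrete set `V` of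
vertices such that each connected component of the complement of `V` is an open edge:
it is the interior of a geodesic segment of positive length with endpoints in `V`. -/
def IsMetricSimplicialTree (X : Type*) [MetricSpace X] : Prop :=
  IsRTree X ∧
    ∃ V : Set X, IsClosed V ∧
      (∀ v ∈ V, ∃ ε > 0, ∀ w ∈ V, dist v w < ε → w = v) ∧
      ∀ x ∈ Vᶜ, ∃ L > (0:ℝ), ∃ f : ℝ → X,
        (∀ s ∈ Set.Icc (0:ℝ) L, ∀ t ∈ Set.Icc (0:ℝ) L, dist (f s) (f t) = |s - t|) ∧
        f '' Set.Ioo 0 L = connectedComponentIn Vᶜ x ∧ f 0 ∈ V ∧ f L ∈ V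

end Common

section Tree

variable {X : Type*} [MetricSpace X]

namespace RTreeAux

open Set

/-- chosen geodesic from `a` to `b`, precomposed with the projection onto `[0, dist a b]`
so that it is globally `1`-Lipschitz. -/
noncomputable def geo (hX : IsRTree X) (a b : X) : ℝ → X :=
  fun u => (hX.1 a b).choose (Set.projIcc 0 (dist a b) dist_nonneg u : ℝ)

lemma geo_spec (hX : IsRTree X) (a b : X) :
    IsGeodesicSegment (geo hX a b) a b := by
  obtain ⟨h0, hd, hiso⟩ := (hX.1 a b).choose_spec
  refine ⟨?_, ?_, ?_⟩
  · rw [geo, Set.projIcc_of_mem _ (Set.left_mem_Icc.2 dist_nonneg)]; exact h0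
  · rw [geo, Set.projIcc_of_mem _ (Set.right_mem_Icc.2 dist_nonneg)]; exact hd
  · intro s hs t ht
    rw [geo, geo, Set.projIcc_of_mem _ hs, Set.projIcc_of_mem _ ht]
    exact hiso s hs t ht

lemma geo_lipschitz (hX : IsRTree X) (a b : X) : LipschitzWith 1 (geo hX a b) := by
  obtain ⟨h0, hd, hiso⟩ := (hX.1 a b).choose_spec
  rw [lipschitzWith_iff_dist_le_mul]
  intro u v
  have h1 := hiso _ (Set.projIcc 0 (dist a b) dist_nonneg u).2
    _ (Set.projIcc 0 (dist a b) dist_nonneg v).2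
  rw [geo, geo, h1]
  have h2 := (LipschitzWith.projIcc (a := (0:ℝ)) (b := dist a b)
    dist_nonneg).dist_le_mul u v
  rw [Subtype.dist_eq, Real.dist_eq] at h2
  rw [Real.dist_eq] at h2 ⊢
  simpa using h2

lemma geo_continuous (hX : IsRTree X) (a b : X) : Continuous (geo hX a b) :=
  (geo_lipschitz hX a b).continuous

lemma geo_zero (hX : IsRTree X) (a b : X) : geo hX a b 0 = a := (geo_spec hX a b).1

lemma geo_dist (hX : IsRTree X) (a b : X) : geo hX a b (dist a b) = b := (geo_spec hX a b).2.1

lemma geo_iso (hX : IsRTree X) (a b : X) {s t : ℝ} (hs : s ∈ Set.Icc 0 (dist a b))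
    (ht : t ∈ Set.Icc 0 (dist a b)) : dist (geo hX a b s) (geo hX a b t) = |s - t| :=
  (geo_spec hX a b).2.2 s hs t ht

/-- distance from the start point along a geodesic -/
lemma geodesic_dist_left {γ : ℝ → X} {a b : X} (h : IsGeodesicSegment γ a b)
    {u : ℝ} (hu : u ∈ Set.Icc 0 (dist a b)) : dist a (γ u) = u := by
  have := h.2.2 0 (Set.left_mem_Icc.2 dist_nonneg) u hu
  rw [h.1] at this
  rw [this, abs_of_nonpos (by linarith [hu.1]), neg_sub, sub_zero]

lemma geodesic_dist_right {γ : ℝ → X} {a b : X} (h : IsGeodesicSegment γ a b)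
    {u : ℝ} (hu : u ∈ Set.Icc 0 (dist a b)) : dist (γ u) b = dist a b - u := by
  have := h.2.2 u hu (dist a b) (Set.right_mem_Icc.2 dist_nonneg)
  rw [h.2.1] at this
  rw [this, abs_of_nonpos (by linarith [hu.2])]
  ring

end RTreeAux
end Tree

section Tree2
variable {X : Type*} [MetricSpace X]
namespace RTreeAux
open Set

lemma geodesic_continuousOn {γ : ℝ → X} {a b : X} (h : IsGeodesicSegment γ a b) :
    ContinuousOn γ (Set.Icc 0 (dist a b)) := by
  have : LipschitzOnWith 1 γ (Set.Icc 0 (dist a b)) := by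
    rw [lipschitzOnWith_iff_dist_le_mul]
    intro s hs t ht
    rw [h.2.2 s hs t ht, Real.dist_eq]
    simp
  exact this.continuousOn

/-- Any geodesic from `a` to `b` agrees with `geo hX a b` on `[0, dist a b]`:
pointwise uniqueness of geodesics in an ℝ-tree. -/
lemma geodesic_unique (hX : IsRTree X) {a b : X} {γ : ℝ → X}
    (h : IsGeodesicSegment γ a b) {u : ℝ} (hu : u ∈ Set.Icc 0 (dist a b)) :
    γ u = geo hX a b u := by
  rcases eq_or_ne a b with rfl | hab
  · have : u = 0 := le_antisymm (by simpa [dist_self] using hu.2) hu.1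
    rw [this, h.1, geo_zero]
  · have hd : (0:ℝ) < dist a b := dist_pos.2 hab
    have harc : ∀ δ : ℝ → X, IsGeodesicSegment δ a b →
        IsArcParam (fun w => δ (w * dist a b)) a b := by
      intro δ hδ
      have hmapsto : ∀ w ∈ Set.Icc (0:ℝ) 1, w * dist a b ∈ Set.Icc 0 (dist a b) := by
        intro w hw
        exact ⟨mul_nonneg hw.1 hd.le, by nlinarith [hw.2]⟩
      refine ⟨?_, ?_, ?_, ?_⟩
      · refine ContinuousOn.comp (geodesic_continuousOn hδ) ?_ hmapsto
        exact (continuous_mul_right _).continuousOn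
      · intro s hs t ht hst
        have := hδ.2.2 _ (hmapsto s hs) _ (hmapsto t ht)
        simp only at hst
        rw [hst, dist_self] at this
        have h0 : |s * dist a b - t * dist a b| = 0 := this.symm
        rw [← sub_mul, abs_mul, abs_of_nonneg hd.le, mul_eq_zero] at h0
        rcases h0 with h0 | h0
        · have := abs_eq_zero.1 h0; linarith [sub_eq_zero.1 this]
        · exact absurd h0 hd.ne'
      · simpa using hδ.1
      · simpa using hδ.2.1
    have himg := hX.2 a b _ _ (harc γ h) (harc (geo hX a b) (geo_spec hX a b))
    have hmem : γ u ∈ (fun w => γ (w * dist a b)) '' Set.Icc 0 1 := by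
      refine ⟨u / dist a b, ⟨div_nonneg hu.1 hd.le, by rw [div_le_one hd]; exact hu.2⟩, ?_⟩
      simp only [div_mul_cancel₀ _ hd.ne']
    rw [himg] at hmem
    obtain ⟨w, hw, hweq⟩ := hmem
    have hwd : w * dist a b ∈ Set.Icc 0 (dist a b) :=
      ⟨mul_nonneg hw.1 hd.le, by nlinarith [hw.2]⟩
    have h2 : dist a (geo hX a b (w * dist a b)) = w * dist a b :=
      geodesic_dist_left (geo_spec hX a b) hwd
    have h1 : dist a (γ u) = u := geodesic_dist_left h hu
    simp only at hweq
    have : w * dist a b = u := by rw [hweq, h1] at h2; exact h2.symm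
    rw [← hweq, this]

end RTreeAux
end Tree2

section Tree3
variable {X : Type*} [MetricSpace X]
namespace RTreeAux
open Set

/-- If distances add up, the middle point lies on the geodesic, at the expected parameter. -/
lemma geo_concat (hX : IsRTree X) {a b c : X} (hd : dist a c = dist a b + dist b c) :
    geo hX a c (dist a b) = b := by
  set d1 := dist a b with hd1
  set d2 := dist b c with hd2
  have hd1' : 0 ≤ d1 := dist_nonneg
  have hd2' : 0 ≤ d2 := dist_nonneg
  set δ : ℝ → X := fun u => if u ≤ d1 then geo hX a b u else geo hX b c (u - d1) with hδ
  have hmix : ∀ s t : ℝ, 0 ≤ s → s ≤ d1 → d1 < t → t ≤ d1 + d2 →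
      dist (geo hX a b s) (geo hX b c (t - d1)) = t - s := by
    intro s t hs0 hs1 ht1 ht2
    have hsI : s ∈ Set.Icc 0 d1 := ⟨hs0, hs1⟩
    have htI : t - d1 ∈ Set.Icc 0 d2 := ⟨by linarith, by linarith⟩
    have hPb : dist (geo hX a b s) b = d1 - s := geodesic_dist_right (geo_spec hX a b) hsI
    have hbQ : dist b (geo hX b c (t - d1)) = t - d1 :=
      geodesic_dist_left (geo_spec hX b c) htI
    have hQc : dist (geo hX b c (t - d1)) c = d2 - (t - d1) :=
      geodesic_dist_right (geo_spec hX b c) htI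
    have haP : dist a (geo hX a b s) = s := geodesic_dist_left (geo_spec hX a b) hsI
    have hub : dist (geo hX a b s) (geo hX b c (t - d1)) ≤ t - s := by
      calc dist (geo hX a b s) (geo hX b c (t - d1))
          ≤ dist (geo hX a b s) b + dist b (geo hX b c (t - d1)) := dist_triangle _ _ _
        _ = t - s := by rw [hPb, hbQ]; ring
    have haQ : t ≤ dist a (geo hX b c (t - d1)) := by
      have h1 : dist a c ≤ dist a (geo hX b c (t - d1)) + dist (geo hX b c (t - d1)) c :=
        dist_triangle _ _ _
      rw [hQc] at h1
      have : dist a c = d1 + d2 := hd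
      linarith
    have hlb : t - s ≤ dist (geo hX a b s) (geo hX b c (t - d1)) := by
      have h1 : dist a (geo hX b c (t - d1)) ≤
          dist a (geo hX a b s) + dist (geo hX a b s) (geo hX b c (t - d1)) :=
        dist_triangle _ _ _
      rw [haP] at h1
      linarith
    linarith
  have hgeod : IsGeodesicSegment δ a c := by
    refine ⟨?_, ?_, ?_⟩
    · rw [hδ]; simp only [if_pos hd1']; exact geo_zero hX a b
    · rw [hδ, hd]; simp only
      rcases eq_or_lt_of_le hd2' with h2 | h2
      · have hbc : b = c := dist_eq_zero.1 h2.symm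
        rw [if_pos (by linarith), ← h2, add_zero, geo_dist, hbc]
      · rw [if_neg (by linarith), add_sub_cancel_left, geo_dist]
    · rw [hd]
      intro s hs t ht
      rw [hδ]; simp only
      rcases le_or_gt s d1 with hs1 | hs1 <;> rcases le_or_gt t d1 with ht1 | ht1
      · rw [if_pos hs1, if_pos ht1]
        exact geo_iso hX a b ⟨hs.1, hs1⟩ ⟨ht.1, ht1⟩
      · rw [if_pos hs1, if_neg (not_le.2 ht1)]
        rw [hmix s t hs.1 hs1 ht1 ht.2, abs_of_nonpos (by linarith)]
        ring
      · rw [if_neg (not_le.2 hs1), if_pos ht1]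
        rw [dist_comm, hmix t s ht.1 ht1 hs1 hs.2, abs_of_nonneg (by linarith)]
      · rw [if_neg (not_le.2 hs1), if_neg (not_le.2 ht1)]
        rw [geo_iso hX b c ⟨by linarith, by linarith [hs.2]⟩ ⟨by linarith, by linarith [ht.2]⟩]
        congr 1
        ring
  have := geodesic_unique hX hgeod (u := d1) ⟨hd1', by rw [hd]; linarith⟩
  rw [← this, hδ]
  simp only [if_pos le_rfl]
  exact geo_dist hX a b

/-- image of the chosen geodesic -/
noncomputable def segIm (hX : IsRTree X) (a b : X) : Set X :=
  geo hX a b '' Set.Icc 0 (dist a b)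

lemma left_mem_segIm (hX : IsRTree X) (a b : X) : a ∈ segIm hX a b :=
  ⟨0, Set.left_mem_Icc.2 dist_nonneg, geo_zero hX a b⟩

lemma right_mem_segIm (hX : IsRTree X) (a b : X) : b ∈ segIm hX a b :=
  ⟨dist a b, Set.right_mem_Icc.2 dist_nonneg, geo_dist hX a b⟩

lemma mem_segIm_of_dist_add (hX : IsRTree X) {a b c : X}
    (hd : dist a c = dist a b + dist b c) : b ∈ segIm hX a c :=
  ⟨dist a b, ⟨dist_nonneg, by rw [hd]; linarith [dist_nonneg (x := b) (y := c)]⟩,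
    geo_concat hX hd⟩

lemma dist_le_of_mem_segIm (hX : IsRTree X) {a b x : X} (hx : x ∈ segIm hX a b) :
    dist a x ≤ dist a b ∧ dist a x + dist x b = dist a b := by
  obtain ⟨u, hu, rfl⟩ := hx
  rw [geodesic_dist_left (geo_spec hX a b) hu, geodesic_dist_right (geo_spec hX a b) hu]
  exact ⟨hu.2, by ring⟩

/-- reversal: `segIm` is symmetric -/
lemma segIm_symm (hX : IsRTree X) (a b : X) : segIm hX a b = segIm hX b a := by
  have hrev : IsGeodesicSegment (fun u => geo hX a b (dist a b - u)) b a := by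
    refine ⟨?_, ?_, ?_⟩
    · simp only [sub_zero]; exact geo_dist hX a b
    · rw [dist_comm b a]; simp only [sub_self]; exact geo_zero hX a b
    · rw [dist_comm b a]
      intro s hs t ht
      rw [geo_iso hX a b ⟨by linarith [hs.2], by linarith [hs.1]⟩
        ⟨by linarith [ht.2], by linarith [ht.1]⟩]
      rw [abs_sub_comm]
      congr 1
      ring
  ext x
  constructor
  · rintro ⟨u, hu, rfl⟩
    refine ⟨dist a b - u, ?_, ?_⟩
    · rw [dist_comm b a]; exact ⟨by linarith [hu.2], by linarith [hu.1]⟩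
    · rw [← geodesic_unique hX hrev (by rw [dist_comm b a]; exact ⟨by linarith [hu.2], by linarith [hu.1]⟩)]
      simp only [sub_sub_cancel]
  · rintro ⟨u, hu, rfl⟩
    rw [dist_comm b a] at hu
    rw [← geodesic_unique hX hrev (by rw [dist_comm b a]; exact hu)]
    exact ⟨dist a b - u, ⟨by linarith [hu.2], by linarith [hu.1]⟩, rfl⟩

end RTreeAux
end Tree3

section Tree4
variable {X : Type*} [MetricSpace X]
namespace RTreeAux
open Set

lemma arcParam_scale {γ : ℝ → X} {a b : X} (h : IsGeodesicSegment γ a b)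
    (hcont : ContinuousOn γ (Set.Icc 0 (dist a b))) (hd : 0 < dist a b) :
    IsArcParam (fun w => γ (w * dist a b)) a b := by
  have hmapsto : ∀ w ∈ Set.Icc (0:ℝ) 1, w * dist a b ∈ Set.Icc 0 (dist a b) := by
    intro w hw
    exact ⟨mul_nonneg hw.1 hd.le, by nlinarith [hw.2]⟩
  refine ⟨?_, ?_, ?_, ?_⟩
  · exact ContinuousOn.comp hcont (continuous_mul_right _).continuousOn hmapsto
  · intro s hs t ht hst
    have h2 := h.2.2 _ (hmapsto s hs) _ (hmapsto t ht)
    simp only at hst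
    rw [hst, dist_self] at h2
    have h0 : |s * dist a b - t * dist a b| = 0 := h2.symm
    rw [← sub_mul, abs_mul, abs_of_nonneg hd.le, mul_eq_zero] at h0
    rcases h0 with h0 | h0
    · linarith [sub_eq_zero.1 (abs_eq_zero.1 h0)]
    · exact absurd h0 hd.ne'
  · simpa using h.1
  · simpa using h.2.1

/-- scaled image over `[0,1]` equals image over `[0,L]` -/
lemma scale_image {f : ℝ → X} {L : ℝ} (hL : 0 < L) :
    (fun w => f (w * L)) '' Set.Icc 0 1 = f '' Set.Icc 0 L := by
  ext x
  constructor
  · rintro ⟨w, hw, rfl⟩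
    exact ⟨w * L, ⟨mul_nonneg hw.1 hL.le, by nlinarith [hw.2]⟩, rfl⟩
  · rintro ⟨v, hv, rfl⟩
    refine ⟨v / L, ⟨div_nonneg hv.1 hL.le, by rw [div_le_one hL]; exact hv.2⟩, ?_⟩
    simp [div_mul_cancel₀ _ hL.ne']

set_option maxHeartbeats 1000000 in
/-- **The overlap lemma** (existence of medians in an ℝ-tree).
For a vertex `a` and points `b`, `c`, the chosen geodesics from `a` to `b` and from `a`
to `c` coincide on an initial segment `[0, ℓ]`, after which they diverge; the geodesic
from `b` to `c` is the union of the two tails, and distances add accordingly. -/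
lemma overlap (hX : IsRTree X) (a b c : X) :
    ∃ ℓ : ℝ, 0 ≤ ℓ ∧ ℓ ≤ dist a b ∧ ℓ ≤ dist a c ∧
      (∀ u, 0 ≤ u → u ≤ ℓ → geo hX a b u = geo hX a c u) ∧
      (∀ u, 0 ≤ u → u ≤ dist a b → u ≤ dist a c → geo hX a b u = geo hX a c u → u ≤ ℓ) ∧
      dist b c = dist a b + dist a c - 2*ℓ ∧
      segIm hX b c = geo hX a b '' Set.Icc ℓ (dist a b) ∪ geo hX a c '' Set.Icc ℓ (dist a c) := by
  classical
  set d1 := dist a b with hd1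
  set d2 := dist a c with hd2
  have hd1' : 0 ≤ d1 := dist_nonneg
  have hd2' : 0 ≤ d2 := dist_nonneg
  set A : Set ℝ := {u : ℝ | u ∈ Set.Icc 0 d1 ∧ u ∈ Set.Icc 0 d2 ∧ geo hX a b u = geo hX a c u}
    with hA
  have hA0 : (0:ℝ) ∈ A := by
    refine ⟨Set.left_mem_Icc.2 hd1', Set.left_mem_Icc.2 hd2', ?_⟩
    rw [geo_zero, geo_zero]
  have hAclosed : IsClosed A := by
    have : A = Set.Icc 0 d1 ∩ Set.Icc 0 d2 ∩ {u | geo hX a b u = geo hX a c u} := by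
      ext u; simp only [hA, Set.mem_setOf_eq, Set.mem_inter_iff]; tauto
    rw [this]
    exact (isClosed_Icc.inter isClosed_Icc).inter
      (isClosed_eq (geo_continuous hX a b) (geo_continuous hX a c))
  have hAbdd : BddAbove A := ⟨d1, fun u hu => hu.1.2⟩
  set ℓ := sSup A with hℓdef
  have hℓA : ℓ ∈ A := hAclosed.csSup_mem ⟨0, hA0⟩ hAbdd
  have hℓ0 : 0 ≤ ℓ := hℓA.1.1
  have hℓ1 : ℓ ≤ d1 := hℓA.1.2
  have hℓ2 : ℓ ≤ d2 := hℓA.2.1.2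
  have hℓeq : geo hX a b ℓ = geo hX a c ℓ := hℓA.2.2
  have hle : ∀ u ∈ A, u ≤ ℓ := fun u hu => le_csSup hAbdd hu
  -- downward closedness
  have hdown : ∀ u, 0 ≤ u → u ≤ ℓ → geo hX a b u = geo hX a c u := by
    intro u hu0 huℓ
    set p := geo hX a b ℓ with hp
    have hdp1 : dist a p = ℓ := geodesic_dist_left (geo_spec hX a b) ⟨hℓ0, hℓ1⟩
    have hg1 : IsGeodesicSegment (geo hX a b) a p := by
      refine ⟨geo_zero hX a b, by rw [hdp1], ?_⟩
      rw [hdp1]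
      intro s hs t ht
      exact geo_iso hX a b ⟨hs.1, hs.2.trans hℓ1⟩ ⟨ht.1, ht.2.trans hℓ1⟩
    have hg2 : IsGeodesicSegment (geo hX a c) a p := by
      refine ⟨geo_zero hX a c, by rw [hdp1, ← hℓeq], ?_⟩
      rw [hdp1]
      intro s hs t ht
      exact geo_iso hX a c ⟨hs.1, hs.2.trans hℓ2⟩ ⟨ht.1, ht.2.trans hℓ2⟩
    have e1 := geodesic_unique hX hg1 (u := u) (by rw [hdp1]; exact ⟨hu0, huℓ⟩)
    have e2 := geodesic_unique hX hg2 (u := u) (by rw [hdp1]; exact ⟨hu0, huℓ⟩)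
    rw [e1, e2]
  refine ⟨ℓ, hℓ0, hℓ1, hℓ2, hdown, fun u hu0 hu1 hu2 hgeq => hle u ⟨⟨hu0, hu1⟩, ⟨hu0, hu2⟩, hgeq⟩, ?_⟩
  by_cases hcase : ℓ = d1 ∧ ℓ = d2
  · -- degenerate case : b = c
    obtain ⟨hc1, hc2⟩ := hcase
    have hb : b = geo hX a b ℓ := by rw [hc1]; exact (geo_dist hX a b).symm
    have hc : c = geo hX a c ℓ := by rw [hc2]; exact (geo_dist hX a c).symm
    have hbc : b = c := by rw [hb, hc, hℓeq]
    have hdist : dist b c = 0 := by rw [hbc, dist_self]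
    constructor
    · rw [hdist]; linarith [hc1, hc2]
    · have hsing : segIm hX b c = {b} := by
        rw [segIm, hdist, Set.Icc_self, Set.image_singleton, geo_zero]
      rw [← hc1, ← hc2, hsing, Set.Icc_self, Set.image_singleton, Set.image_singleton, hℓeq,
        Set.union_self, hbc, ← hc]
  · -- main case
    have hL : 0 < (d1 - ℓ) + (d2 - ℓ) := by
      rcases not_and_or.1 hcase with h | h
      · have : ℓ < d1 := lt_of_le_of_ne hℓ1 h
        linarith
      · have : ℓ < d2 := lt_of_le_of_ne hℓ2 h
        linarith
    set L := (d1 - ℓ) + (d2 - ℓ) with hLdef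
    have hbc : b ≠ c := by
      intro hbceq
      have hgc : IsGeodesicSegment (geo hX a c) a b := by
        rw [hbceq]
        exact geo_spec hX a c
      have hdd : d2 = d1 := by rw [hd1, hd2, hbceq]
      have heq' : ∀ u ∈ Set.Icc (0:ℝ) d1, geo hX a c u = geo hX a b u := by
        intro u hu
        exact geodesic_unique hX hgc hu
      have hd1A : d1 ∈ A := by
        refine ⟨Set.right_mem_Icc.2 hd1', ⟨hd1', hdd.ge⟩, ?_⟩
        exact (heq' d1 (Set.right_mem_Icc.2 hd1')).symm
      have h1 : ℓ = d1 := le_antisymm hℓ1 (hle d1 hd1A)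
      have h2 : ℓ = d2 := by rw [hdd]; exact h1
      exact hcase ⟨h1, h2⟩
    have hdbc : 0 < dist b c := dist_pos.2 hbc
    set α : ℝ → X := fun v => if v ≤ d1 - ℓ then geo hX a b (d1 - v) else geo hX a c (v - d1 + 2*ℓ)
      with hα
    -- basic facts
    have hval1 : ∀ v, v ≤ d1 - ℓ → α v = geo hX a b (d1 - v) := by
      intro v hv; rw [hα]; simp only [if_pos hv]
    have hval2 : ∀ v, ¬ (v ≤ d1 - ℓ) → α v = geo hX a c (v - d1 + 2*ℓ) := by
      intro v hv; rw [hα]; simp only [if_neg hv]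
    have hcont : Continuous α := by
      rw [hα]
      refine Continuous.if_le ?_ ?_ continuous_id continuous_const ?_
      · exact (geo_continuous hX a b).comp (continuous_const.sub continuous_id)
      · exact (geo_continuous hX a c).comp
          ((continuous_id.sub continuous_const).add continuous_const)
      · intro v hv
        subst hv
        have e1 : d1 - (d1 - ℓ) = ℓ := by ring
        have e2 : (d1 - ℓ) - d1 + 2*ℓ = ℓ := by ring
        rw [e1, e2, hℓeq]
    have hdista1 : ∀ v, 0 ≤ v → v ≤ d1 - ℓ → dist a (α v) = d1 - v := by
      intro v h0 h1
      rw [hval1 v h1]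
      exact geodesic_dist_left (geo_spec hX a b) ⟨by linarith, by linarith⟩
    have hdista2 : ∀ v, d1 - ℓ < v → v ≤ L → dist a (α v) = v - d1 + 2*ℓ := by
      intro v h0 h1
      rw [hval2 v (not_le.2 h0)]
      exact geodesic_dist_left (geo_spec hX a c) ⟨by linarith, by linarith [hLdef]⟩
    -- injectivity
    have hmixfalse : ∀ v v', 0 ≤ v → v ≤ d1 - ℓ → d1 - ℓ < v' → v' ≤ L → α v = α v' → False := by
      intro v v' hv0 hv1 hv'0 hv'1 heq
      have h1 : dist a (α v) = d1 - v := hdista1 v hv0 hv1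
      have h2 : dist a (α v') = v' - d1 + 2*ℓ := hdista2 v' hv'0 hv'1
      rw [heq] at h1
      have huu : d1 - v = v' - d1 + 2*ℓ := by rw [← h1, h2]
      set w := v' - d1 + 2*ℓ with hw
      have hwℓ : ℓ < w := by rw [hw]; linarith
      have hwd2 : w ≤ d2 := by rw [hw]; linarith [hLdef]
      have hwd1 : w ≤ d1 := by rw [← huu]; linarith
      have hw0 : 0 ≤ w := by linarith
      have hgeq : geo hX a b w = geo hX a c w := by
        rw [← huu] at *
        rw [← hval1 v hv1, heq, hval2 v' (not_le.2 hv'0), ← hw]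
      have : w ∈ A := ⟨⟨hw0, hwd1⟩, ⟨hw0, hwd2⟩, hgeq⟩
      linarith [hle w this]
    have hinj : Set.InjOn α (Set.Icc 0 L) := by
      intro v hv v' hv' heq
      rcases le_or_gt v (d1 - ℓ) with h1 | h1 <;> rcases le_or_gt v' (d1 - ℓ) with h2 | h2
      · have e1 : dist a (α v) = d1 - v := hdista1 v hv.1 h1
        have e2 : dist a (α v') = d1 - v' := hdista1 v' hv'.1 h2
        rw [heq, e2] at e1
        linarith
      · exact absurd (hmixfalse v v' hv.1 h1 h2 hv'.2 heq) (by simp)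
      · exact absurd (hmixfalse v' v hv'.1 h2 h1 hv.2 heq.symm) (by simp)
      · have e1 : dist a (α v) = v - d1 + 2*ℓ := hdista2 v h1 hv.2
        have e2 : dist a (α v') = v' - d1 + 2*ℓ := hdista2 v' h2 hv'.2
        rw [heq, e2] at e1
        linarith
    -- endpoints
    have hα0 : α 0 = b := by
      rw [hval1 0 (by linarith), sub_zero]
      exact geo_dist hX a b
    have hαL : α L = c := by
      rcases le_or_gt L (d1 - ℓ) with h1 | h1
      · have hd2ℓ : d2 = ℓ := by rw [hLdef] at h1; linarith
        rw [hval1 L h1]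
        have : d1 - L = ℓ := by rw [hLdef, hd2ℓ]; ring
        rw [this, hℓeq, ← hd2ℓ]
        exact geo_dist hX a c
      · rw [hval2 L (not_le.2 h1)]
        have : L - d1 + 2*ℓ = d2 := by rw [hLdef]; ring
        rw [this]
        exact geo_dist hX a c
    -- arc parametrisations from b to c
    set αs : ℝ → X := fun w => α (w * L) with hαs
    have hαsarc : IsArcParam αs b c := by
      refine ⟨(hcont.comp (continuous_mul_right L)).continuousOn, ?_, ?_, ?_⟩
      · intro s hs t ht hst
        have hsL : s * L ∈ Set.Icc 0 L := ⟨mul_nonneg hs.1 hL.le, by nlinarith [hs.2]⟩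
        have htL : t * L ∈ Set.Icc 0 L := ⟨mul_nonneg ht.1 hL.le, by nlinarith [ht.2]⟩
        have := hinj hsL htL hst
        exact mul_right_cancel₀ hL.ne' this
      · rw [hαs]; simp only [zero_mul]; exact hα0
      · rw [hαs]; simp only [one_mul]; exact hαL
    have hβarc : IsArcParam (fun w => geo hX b c (w * dist b c)) b c :=
      arcParam_scale (geo_spec hX b c) (geo_continuous hX b c).continuousOn hdbc
    have himg := hX.2 b c αs _ hαsarc hβarc
    have hβim : (fun w => geo hX b c (w * dist b c)) '' Set.Icc 0 1 = segIm hX b c :=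
      scale_image hdbc
    have hαsim : αs '' Set.Icc 0 1 = α '' Set.Icc 0 L := scale_image hL
    have hαim : α '' Set.Icc 0 L =
        geo hX a b '' Set.Icc ℓ d1 ∪ geo hX a c '' Set.Icc ℓ d2 := by
      ext x
      constructor
      · rintro ⟨v, hv, rfl⟩
        rcases le_or_gt v (d1 - ℓ) with h1 | h1
        · left
          exact ⟨d1 - v, ⟨by linarith, by linarith [hv.1]⟩, (hval1 v h1).symm⟩
        · right
          exact ⟨v - d1 + 2*ℓ, ⟨by linarith, by linarith [hv.2, hLdef]⟩,
            (hval2 v (not_le.2 h1)).symm⟩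
      · rintro (⟨u, hu, rfl⟩ | ⟨u, hu, rfl⟩)
        · refine ⟨d1 - u, ⟨by linarith [hu.2], by linarith [hu.1, hLdef]⟩, ?_⟩
          rw [hval1 (d1 - u) (by linarith [hu.1])]
          congr 1
          ring
        · rcases eq_or_lt_of_le hu.1 with h1 | h1
          · refine ⟨d1 - ℓ, ⟨by linarith, by linarith [hLdef]⟩, ?_⟩
            rw [hval1 (d1 - ℓ) le_rfl]
            have : d1 - (d1 - ℓ) = ℓ := by ring
            rw [this, hℓeq, h1]
          · refine ⟨u + d1 - 2*ℓ, ⟨by linarith, by linarith [hu.2, hLdef]⟩, ?_⟩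
            rw [hval2 (u + d1 - 2*ℓ) (by intro h; linarith)]
            congr 1
            ring
    have hfinal : segIm hX b c =
        geo hX a b '' Set.Icc ℓ d1 ∪ geo hX a c '' Set.Icc ℓ d2 := by
      rw [← hβim, ← himg, hαsim, hαim]
    refine ⟨?_, hfinal⟩
    -- the distance formula
    have hμmem : geo hX a b ℓ ∈ segIm hX b c := by
      rw [hfinal]
      left
      exact ⟨ℓ, Set.left_mem_Icc.2 hℓ1, rfl⟩
    obtain ⟨w₀, hw₀, hμ⟩ := hμmem
    have e1 : dist b (geo hX a b ℓ) = d1 - ℓ := by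
      rw [dist_comm]
      exact geodesic_dist_right (geo_spec hX a b) ⟨hℓ0, hℓ1⟩
    have e2 : dist (geo hX a b ℓ) c = d2 - ℓ := by
      rw [hℓeq]
      exact geodesic_dist_right (geo_spec hX a c) ⟨hℓ0, hℓ2⟩
    have e3 : dist b (geo hX b c w₀) = w₀ := geodesic_dist_left (geo_spec hX b c) hw₀
    have e4 : dist (geo hX b c w₀) c = dist b c - w₀ :=
      geodesic_dist_right (geo_spec hX b c) hw₀
    rw [hμ] at e3 e4
    rw [e1] at e3
    rw [e2] at e4
    linarith
end RTreeAux
end Tree4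

section Tree5
variable {X : Type*} [MetricSpace X]
namespace RTreeAux
open Set

/-- the tripod inclusion: `[b,c] ⊆ [x,b] ∪ [x,c]` -/
lemma segIm_subset_union (hX : IsRTree X) (x b c : X) :
    segIm hX b c ⊆ segIm hX x b ∪ segIm hX x c := by
  obtain ⟨ℓ, h0, h1, h2, hdown, hmax, hdist, him⟩ := overlap hX x b c
  rw [him]
  rintro y (⟨u, hu, rfl⟩ | ⟨u, hu, rfl⟩)
  · exact Or.inl ⟨u, ⟨h0.trans hu.1, hu.2⟩, rfl⟩
  · exact Or.inr ⟨u, ⟨h0.trans hu.1, hu.2⟩, rfl⟩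

lemma segIm_self (hX : IsRTree X) (a : X) : segIm hX a a = {a} := by
  rw [segIm, dist_self, Set.Icc_self, Set.image_singleton, geo_zero]

lemma segIm_compact (hX : IsRTree X) (a b : X) : IsCompact (segIm hX a b) :=
  isCompact_Icc.image (geo_continuous hX a b)

/-- geodesic convexity -/
def Conv (hX : IsRTree X) (S : Set X) : Prop := ∀ a ∈ S, ∀ b ∈ S, segIm hX a b ⊆ S

/-- In an ℝ-tree, a preconnected set is geodesically convex. -/
lemma conv_of_isPreconnected (hX : IsRTree X) {S : Set X} (hS : IsPreconnected S) :
    Conv hX S := by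
  intro a ha b hb x hxmem
  by_contra hp
  obtain ⟨t₀, ht₀, rfl⟩ := hxmem
  set p := geo hX a b t₀ with hpdef
  have hpa : p ≠ a := fun h => hp (h ▸ ha)
  have hpb : p ≠ b := fun h => hp (h ▸ hb)
  set U : Set X := {z | p ∉ segIm hX a z} with hU
  set V : Set X := {z | z ≠ p ∧ p ∈ segIm hX a z} with hV
  have hUopen : IsOpen U := by
    rw [Metric.isOpen_iff]
    intro z hz
    have hclosed : IsClosed (segIm hX a z) := (segIm_compact hX a z).isClosed
    have hne : (segIm hX a z).Nonempty := ⟨z, right_mem_segIm hX a z⟩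
    have hr : 0 < Metric.infDist p (segIm hX a z) :=
      (hclosed.notMem_iff_infDist_pos hne).1 hz
    refine ⟨_, hr, ?_⟩
    intro y hy
    rw [Metric.mem_ball] at hy
    intro hpy
    rcases segIm_subset_union hX z a (c := y) hpy with h | h
    · exact hz ((segIm_symm hX z a) ▸ h)
    · have h1 : dist z p ≤ dist z y := (dist_le_of_mem_segIm hX h).1
      have h2 : Metric.infDist p (segIm hX a z) ≤ dist p z :=
        Metric.infDist_le_dist_of_mem (right_mem_segIm hX a z)
      rw [dist_comm p z] at h2
      rw [dist_comm y z] at hy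
      linarith
  have hVopen : IsOpen V := by
    rw [Metric.isOpen_iff]
    intro z hz
    obtain ⟨hzp, hpz⟩ := hz
    have hd : 0 < dist z p := dist_pos.2 hzp
    refine ⟨_, hd, ?_⟩
    intro y hy
    rw [Metric.mem_ball] at hy
    have hsub := segIm_subset_union hX y a (c := z)
    rcases hsub hpz with h | h
    · refine ⟨?_, (segIm_symm hX y a) ▸ h⟩
      intro hyp
      rw [hyp, dist_comm] at hy
      exact lt_irrefl _ hy
    · exfalso
      have h1 : dist y p + dist p z = dist y z := (dist_le_of_mem_segIm hX h).2
      have h2 : 0 ≤ dist y p := dist_nonneg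
      have h4 : dist p z = dist z p := dist_comm p z
      linarith
  have hcover : S ⊆ U ∪ V := by
    intro z hzS
    by_cases h : p ∈ segIm hX a z
    · right
      refine ⟨?_, h⟩
      intro hzp
      exact hp (hzp ▸ hzS)
    · left; exact h
  have haU : a ∈ S ∩ U := by
    refine ⟨ha, ?_⟩
    rw [hU, Set.mem_setOf_eq, segIm_self hX a]
    simpa using hpa
  have hbV : b ∈ S ∩ V := by
    refine ⟨hb, fun h => hpb h.symm, ⟨t₀, ht₀, rfl⟩⟩
  have := hS U V hUopen hVopen hcover ⟨a, haU⟩ ⟨b, hbV⟩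
  obtain ⟨z, _, hzU, hzV⟩ := this
  exact hzU hzV.2

/-- A nonempty geodesically convex set is connected. -/
lemma isConnected_of_conv (hX : IsRTree X) {S : Set X} (hne : S.Nonempty)
    (hconv : Conv hX S) : IsConnected S := by
  obtain ⟨x₀, hx₀⟩ := hne
  apply IsPathConnected.isConnected
  refine ⟨x₀, hx₀, ?_⟩
  intro y hy
  have hmem : ∀ w : unitInterval, geo hX x₀ y (w * dist x₀ y) ∈ S := by
    intro w
    refine hconv x₀ hx₀ y hy ⟨w * dist x₀ y,
      ⟨mul_nonneg w.2.1 dist_nonneg, ?_⟩, rfl⟩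
    nlinarith [w.2.2, dist_nonneg (x := x₀) (y := y)]
  refine ⟨⟨⟨fun w => geo hX x₀ y (w * dist x₀ y), ?_⟩, ?_, ?_⟩, hmem⟩
  · exact (geo_continuous hX x₀ y).comp
      ((continuous_mul_right _).comp continuous_subtype_val)
  · simp only [Set.Icc.coe_zero, zero_mul]
    exact geo_zero hX x₀ y
  · simp only [Set.Icc.coe_one, one_mul]
    exact geo_dist hX x₀ y

end RTreeAux
end Tree5

section Tree6
variable {X : Type*} [MetricSpace X]
namespace RTreeAux
open Set

lemma line_geodesic {e : ℝ → X} (hiso : ∀ s t, dist (e s) (e t) = |s - t|)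
    {u v : ℝ} (huv : u ≤ v) : IsGeodesicSegment (fun w => e (u + w)) (e u) (e v) := by
  have hd : dist (e u) (e v) = v - u := by rw [hiso]; rw [abs_of_nonpos (by linarith)]; ring
  refine ⟨by simp, by rw [hd]; congr 1; ring, ?_⟩
  intro s hs t ht
  simp only
  rw [hiso]
  congr 1
  ring

/-- points of a line lie on the chosen geodesic between two outer points of the line -/
lemma line_mem_segIm (hX : IsRTree X) {e : ℝ → X} (hiso : ∀ s t, dist (e s) (e t) = |s - t|)
    {u s v : ℝ} (hus : u ≤ s) (hsv : s ≤ v) : e s ∈ segIm hX (e u) (e v) := by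
  have hgeod := line_geodesic hiso (hus.trans hsv)
  have hd : dist (e u) (e v) = v - u := by
    rw [hiso]; rw [abs_of_nonpos (by linarith)]; ring
  have hmem : s - u ∈ Set.Icc 0 (dist (e u) (e v)) := by rw [hd]; exact ⟨by linarith, by linarith⟩
  have := geodesic_unique hX hgeod hmem
  refine ⟨s - u, hmem, ?_⟩
  rw [← this]
  congr 1
  ring

/-- expression of the chosen geodesic from `e u` out along the line -/
lemma geo_line (hX : IsRTree X) {e : ℝ → X} (hiso : ∀ s t, dist (e s) (e t) = |s - t|)
    {u v w : ℝ} (huv : u ≤ v) (hw : w ∈ Set.Icc 0 (v - u)) :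
    geo hX (e u) (e v) w = e (u + w) := by
  have hgeod := line_geodesic hiso huv
  have hd : dist (e u) (e v) = v - u := by
    rw [hiso]; rw [abs_of_nonpos (by linarith)]; ring
  have hmem : w ∈ Set.Icc 0 (dist (e u) (e v)) := by rw [hd]; exact hw
  exact (geodesic_unique hX hgeod hmem).symm

/-- auxiliary form of the projection lemma -/
lemma propP_aux {e : ℝ → X} (hiso : ∀ s t, dist (e s) (e t) = |s - t|) (x : X)
    (sb : ℝ) (h0 : 0 ≤ sb) (hd : sb ≤ dist (e 0) x)
    (hplus : ∀ S, dist (e 0) x ≤ S → dist x (e S) = dist (e 0) x + S - 2*sb)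
    (hminus : ∀ S, dist (e 0) x ≤ S → dist x (e (-S)) = dist (e 0) x + S)
    (hproj : dist x (e sb) = dist (e 0) x - sb) :
    ∀ s, dist x (e s) = (dist (e 0) x - sb) + |s - sb| := by
  intro s
  set d := dist (e 0) x with hddef
  have hd0 : 0 ≤ d := dist_nonneg
  have hupper : dist x (e s) ≤ (d - sb) + |s - sb| := by
    calc dist x (e s) ≤ dist x (e sb) + dist (e sb) (e s) := dist_triangle _ _ _
      _ = (d - sb) + |s - sb| := by rw [hproj, hiso, abs_sub_comm]
  have hlow1 : (d - sb) + (s - sb) ≤ dist x (e s) := by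
    set S := max d s with hS
    have h1 : dist x (e S) ≤ dist x (e s) + dist (e s) (e S) := dist_triangle _ _ _
    rw [hplus S (le_max_left _ _), hiso] at h1
    have h2 : |s - S| = S - s := by
      rw [abs_of_nonpos (sub_nonpos.2 (le_max_right d s))]
      ring
    rw [h2] at h1
    linarith
  have hlow2 : (d - sb) + (sb - s) ≤ dist x (e s) := by
    set S := max d (-s) with hS
    have h1 : dist x (e (-S)) ≤ dist x (e s) + dist (e s) (e (-S)) := dist_triangle _ _ _
    rw [hminus S (le_max_left _ _), hiso] at h1
    have h2 : |s - -S| = s + S := by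
      rw [abs_of_nonneg (by have := le_max_right d (-s); rw [hS]; linarith)]
      ring
    rw [h2] at h1
    linarith
  rcases le_total s sb with h | h
  · rw [abs_of_nonpos (by linarith)] at hupper ⊢
    linarith
  · rw [abs_of_nonneg (by linarith)] at hupper ⊢
    linarith

/-- **Projection onto a line in an ℝ-tree.** -/
lemma propP (hX : IsRTree X) {e : ℝ → X} (hiso : ∀ s t, dist (e s) (e t) = |s - t|)
    (x : X) : ∃ sb h : ℝ, 0 ≤ h ∧ dist x (e sb) = h ∧
      ∀ s, dist x (e s) = h + |s - sb| := by
  set d := dist (e 0) x with hddef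
  have hd0 : 0 ≤ d := dist_nonneg
  -- two half-lines
  have hiso' : ∀ s t, dist ((fun s => e (-s)) s) ((fun s => e (-s)) t) = |s - t| := by
    intro s t
    simp only
    rw [hiso]
    rw [← abs_neg]
    congr 1
    ring
  -- the coincidence parameter with a half-line is independent of how far out we go
  have key : ∀ e' : ℝ → X, (∀ s t, dist (e' s) (e' t) = |s - t|) → e' 0 = e 0 →
      ∃ sb, 0 ≤ sb ∧ sb ≤ d ∧ geo hX (e 0) x sb = e' sb ∧
        (∀ u, 0 ≤ u → u ≤ sb → geo hX (e 0) x u = e' u) ∧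
        (∀ u, 0 ≤ u → u ≤ d → geo hX (e 0) x u = e' u → u ≤ sb) ∧
        ∀ S, d ≤ S → dist x (e' S) = d + S - 2*sb := by
    intro e' hiso' h00
    obtain ⟨ℓ, hℓ0, hℓ1, hℓ2, hdown, hmax, hdist, _⟩ := overlap hX (e 0) x (e' (d + 1))
    have hde' : dist (e 0) (e' (d + 1)) = d + 1 := by
      rw [← h00, hiso']
      rw [abs_of_nonpos (by linarith)]
      ring
    have hgeoe' : ∀ u, 0 ≤ u → u ≤ d + 1 → geo hX (e 0) (e' (d + 1)) u = e' u := by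
      intro u hu0 hu1
      rw [← h00]
      rw [geo_line hX hiso' (by linarith) (by rw [Set.mem_Icc]; constructor <;> linarith)]
      norm_num
    refine ⟨ℓ, hℓ0, hℓ1, ?_, ?_, ?_, ?_⟩
    · have h1 := hdown ℓ hℓ0 le_rfl
      rw [hgeoe' ℓ hℓ0 (by rw [hde'] at hℓ2; linarith)] at h1
      exact h1
    · intro u hu0 huℓ
      rw [← hgeoe' u hu0 (by rw [hde'] at hℓ2; linarith)]
      exact hdown u hu0 huℓ
    · intro u hu0 hud hgeq
      refine hmax u hu0 hud (by rw [hde']; linarith) ?_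
      rw [hgeoe' u hu0 (by linarith)]
      exact hgeq
    · -- distance formula for every S ≥ d
      intro S hS
      obtain ⟨ℓ', hℓ'0, hℓ'1, hℓ'2, hdown', hmax', hdist', _⟩ := overlap hX (e 0) x (e' S)
      have hde'' : dist (e 0) (e' S) = S := by
        rw [← h00, hiso']
        rw [abs_of_nonpos (by linarith)]
        ring
      have hgeoe'' : ∀ u, 0 ≤ u → u ≤ S → geo hX (e 0) (e' S) u = e' u := by
        intro u hu0 hu1
        rw [← h00]
        rw [geo_line hX hiso' (by linarith) (by rw [Set.mem_Icc]; constructor <;> linarith)]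
        norm_num
      have hℓℓ' : ℓ' = ℓ := by
        have hup : ℓ' ≤ ℓ := by
          refine hmax ℓ' hℓ'0 hℓ'1 (by rw [hde']; linarith) ?_
          rw [hgeoe' ℓ' hℓ'0 (by linarith)]
          rw [← hgeoe'' ℓ' hℓ'0 (by rw [hde''] at hℓ'2; linarith)]
          exact hdown' ℓ' hℓ'0 le_rfl
        have hlo : ℓ ≤ ℓ' := by
          refine hmax' ℓ hℓ0 hℓ1 (by rw [hde'']; linarith) ?_
          rw [hgeoe'' ℓ hℓ0 (by linarith)]
          rw [← hgeoe' ℓ hℓ0 (by rw [hde'] at hℓ2; linarith)]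
          exact hdown ℓ hℓ0 le_rfl
        linarith
      simp only [hdist', hde'', hℓℓ', hddef]
  obtain ⟨sp, hsp0, hspd, hspeq, hspdown, hspmax, hspdist⟩ := key e hiso rfl
  obtain ⟨sm, hsm0, hsmd, hsmeq, hsmdown, hsmmax, hsmdist⟩ := key (fun s => e (-s)) hiso' (by simp)
  -- one of the two overlaps is zero
  have hmin : sp = 0 ∨ sm = 0 := by
    by_contra hcon
    push_neg at hcon
    obtain ⟨h1, h2⟩ := hcon
    have hp : 0 < sp := lt_of_le_of_ne hsp0 (Ne.symm h1)
    have hm : 0 < sm := lt_of_le_of_ne hsm0 (Ne.symm h2)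
    set u := min sp sm with hu
    have hu0 : 0 < u := lt_min hp hm
    have e1 : geo hX (e 0) x u = e u := hspdown u hu0.le (min_le_left _ _)
    have e2 : geo hX (e 0) x u = e (-u) := hsmdown u hu0.le (min_le_right _ _)
    have : dist (e u) (e (-u)) = 0 := by rw [← e1, ← e2, dist_self]
    rw [hiso] at this
    have : u - -u = 0 := by
      have := abs_eq_zero.1 this
      linarith [this]
    linarith
  have hprojgen : ∀ (p : X) (sb : ℝ), 0 ≤ sb → sb ≤ d → geo hX (e 0) x sb = p →
      dist x p = d - sb := by
    intro p sb h1 h2 h3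
    rw [← h3, dist_comm]
    exact geodesic_dist_right (geo_spec hX (e 0) x) ⟨h1, h2⟩
  rcases hmin with hcase | hcase
  · -- sp = 0 : apply the aux lemma to the reversed line
    have hproj' : dist x (e (-sm)) = d - sm := hprojgen (e (-sm)) sm hsm0 hsmd hsmeq
    have haux := propP_aux (e := fun s => e (-s)) hiso' x sm hsm0
      (by simpa [← hddef] using hsmd)
      (by
        intro S hS
        simpa [← hddef] using hsmdist S (by simpa [← hddef] using hS))
      (by
        intro S hS
        have h5 := hspdist S (by simpa [← hddef] using hS)
        rw [hcase] at h5
        simpa [← hddef] using h5)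
      (by simpa [← hddef] using hproj')
    refine ⟨-sm, d - sm, by linarith, hproj', ?_⟩
    intro s
    have h2 := haux (-s)
    simp only [neg_neg, neg_zero] at h2
    rw [h2, ← hddef]
    congr 1
    rw [← abs_neg]
    congr 1
    ring
  · -- sm = 0 : apply the aux lemma to the line itself
    have hproj' : dist x (e sp) = d - sp := hprojgen (e sp) sp hsp0 hspd hspeq
    refine ⟨sp, d - sp, by linarith, hproj', ?_⟩
    intro s
    exact propP_aux hiso x sp hsp0 hspd hspdist
      (by
        intro S hS
        have h5 := hsmdist S hS
        rw [hcase] at h5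
        simpa using h5)
      hproj' s

end RTreeAux
end Tree6

section Tree7
variable {X : Type*} [MetricSpace X]
namespace RTreeAux
open Set

lemma translationLength_le (τ : X ≃ᵢ X) (x : X) :
    translationLength τ ≤ dist x (τ x) :=
  ciInf_le ⟨0, by rintro y ⟨z, rfl⟩; exact dist_nonneg⟩ x

/-- A hyperbolic isometry translates along its axis. -/
lemma axis_translation {τ : X ≃ᵢ X} (htpos : 0 < translationLength τ)
    {e : ℝ → X} (hiso : ∀ s t, dist (e s) (e t) = |s - t|)
    (hrange : Set.range e = isomCore τ) :
    ∃ c : ℝ, |c| = translationLength τ ∧ ∀ s, τ (e s) = e (s + c) := by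
  set t := translationLength τ with htdef
  have hcore : ∀ s, dist (e s) (τ (e s)) = t := by
    intro s
    have : e s ∈ isomCore τ := hrange ▸ Set.mem_range_self s
    exact this
  have htau_mem : ∀ s, τ (e s) ∈ Set.range e := by
    intro s
    rw [hrange]
    show dist (τ (e s)) (τ (τ (e s))) = t
    rw [τ.isometry.dist_eq]
    exact hcore s
  choose f hf using fun s => htau_mem s
  have hfiso : ∀ s u, |f s - f u| = |s - u| := by
    intro s u
    rw [← hiso (f s) (f u), hf, hf, τ.isometry.dist_eq, hiso]
  set g : ℝ → ℝ := fun s => f s - f 0 with hg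
  have habs : ∀ s, |g s| = |s| := by
    intro s
    rw [hg]
    simpa using hfiso s 0
  have hsq : ∀ s, g s ^ 2 = s ^ 2 := by
    intro s
    rw [← sq_abs (g s), habs s, sq_abs]
  have hmul : ∀ s u, g s * g u = s * u := by
    intro s u
    have h1 : (g s - g u) ^ 2 = (s - u) ^ 2 := by
      rw [← sq_abs (g s - g u), ← sq_abs (s - u)]
      rw [show g s - g u = f s - f u by rw [hg]; ring]
      rw [hfiso s u]
    nlinarith [hsq s, hsq u]
  have hg1sq : g 1 * g 1 = 1 := by have := hmul 1 1; linarith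
  have hg1 : g 1 = 1 ∨ g 1 = -1 := by
    rcases mul_self_eq_one_iff.1 hg1sq with h | h
    · exact Or.inl h
    · exact Or.inr h
  rcases hg1 with h1 | h1
  · -- translation
    have hgs : ∀ s, g s = s := by
      intro s
      have := hmul s 1
      rw [h1, mul_one, mul_one] at this
      exact this
    have hfs : ∀ s, f s = s + f 0 := by
      intro s
      have := hgs s
      rw [hg] at this
      simp only at this
      linarith
    refine ⟨f 0, ?_, ?_⟩
    · have h2 : dist (e (f 0)) (e 0) = t := by
        rw [hf 0, dist_comm]
        exact hcore 0
      rw [hiso] at h2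
      simpa using h2
    · intro s
      rw [← hf s, hfs s]
  · -- reflection : impossible
    exfalso
    have hgs : ∀ s, g s = -s := by
      intro s
      have := hmul s 1
      rw [h1] at this
      nlinarith
    have hfs : ∀ s, f s = -s + f 0 := by
      intro s
      have := hgs s
      rw [hg] at this
      simp only at this
      linarith
    have hfix : τ (e (f 0 / 2)) = e (f 0 / 2) := by
      rw [← hf (f 0 / 2), hfs (f 0 / 2)]
      congr 1
      ring
    have := hcore (f 0 / 2)
    rw [hfix, dist_self] at this
    rw [← this] at htpos
    exact lt_irrefl _ htpos

/-- Any nonempty convex invariant subset contains the core of a hyperbolic isometry. -/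
lemma core_subset_invariant (hX : IsRTree X) {τ : X ≃ᵢ X} (ht : IsHyperbolicIsom τ)
    {T : Set X} (hconv : Conv hX T) (hne : T.Nonempty) (hinv : τ '' T = T) :
    isomCore τ ⊆ T := by
  obtain ⟨htpos, e, hiso, hrange⟩ := ht
  obtain ⟨c, hc, htr⟩ := axis_translation htpos hiso hrange
  set t := translationLength τ with htdef
  have hcne : c ≠ 0 := by
    intro h
    rw [h] at hc
    simp at hc
    rw [← hc] at htpos
    exact lt_irrefl _ htpos
  have hinv' : τ.symm '' T = T := by
    calc τ.symm '' T = τ.symm '' (τ '' T) := by rw [hinv]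
      _ = T := by
        rw [Set.image_image]
        simp only [τ.symm_apply_apply, Set.image_id']
  obtain ⟨x, hx⟩ := hne
  obtain ⟨sb, h, hh0, hproj, hP⟩ := propP hX hiso x
  set q := e sb with hq
  have htx_dist : ∀ s, dist (τ x) (e s) = h + |s - (sb + c)| := by
    intro s
    have hsymm : τ.symm (e s) = e (s - c) := by
      have := htr (s - c)
      rw [show s - c + c = s by ring] at this
      rw [← this, τ.symm_apply_apply]
    calc dist (τ x) (e s) = dist (τ.symm (τ x)) (τ.symm (e s)) := by
          rw [τ.symm.isometry.dist_eq]
      _ = dist x (e (s - c)) := by rw [τ.symm_apply_apply, hsymm]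
      _ = h + |s - c - sb| := hP (s - c)
      _ = h + |s - (sb + c)| := by rw [show s - c - sb = s - (sb + c) by ring]
  have hqτx : dist q (τ x) = h + t := by
    rw [dist_comm, htx_dist sb]
    rw [show sb - (sb + c) = -c by ring, abs_neg, hc]
  have hxq : dist x q = h := hproj
  -- the geodesics from q to x and from q to τ x diverge immediately
  obtain ⟨ℓ, hℓ0, hℓ1, hℓ2, hdown, hmax, hdist, _⟩ := overlap hX q x (τ x)
  have hℓzero : ℓ = 0 := by
    by_contra hℓne
    have hℓpos : 0 < ℓ := lt_of_le_of_ne hℓ0 (Ne.symm hℓne)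
    set u := min ℓ t with hu
    have hu0 : 0 < u := lt_min hℓpos htpos
    have huℓ : u ≤ ℓ := min_le_left _ _
    have hut : u ≤ t := min_le_right _ _
    have huh : u ≤ h := by
      have : ℓ ≤ h := by rw [dist_comm q x, hxq] at hℓ1; exact hℓ1
      linarith
    set w := sb + (u * c) / t with hw
    have hdqe : dist q (e w) = u := by
      rw [hq, hiso]
      rw [show sb - w = -((u * c)/t) by rw [hw]; ring, abs_neg, abs_div, abs_mul, hc]
      rw [abs_of_nonneg hu0.le, abs_of_nonneg (by linarith)]
      field_simp
    have hdew : dist (e w) (τ x) = h + t - u := by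
      rw [dist_comm, htx_dist w]
      rw [show w - (sb + c) = (u * c)/t - c by rw [hw]; ring]
      have : |(u * c)/t - c| = t - u := by
        rw [show (u * c)/t - c = (u - t) * (c / t) by field_simp]
        rw [abs_mul, abs_div, hc, abs_of_pos htpos, div_self (ne_of_gt htpos), mul_one]
        rw [abs_of_nonpos (by linarith)]
        ring
      rw [this]
      ring
    have hadd : dist q (τ x) = dist q (e w) + dist (e w) (τ x) := by
      rw [hqτx, hdqe, hdew]
      ring
    have hz : geo hX q (τ x) (dist q (e w)) = e w := geo_concat hX hadd
    rw [hdqe] at hz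
    have hz2 : geo hX q x u = e w := by
      rw [hdown u hu0.le huℓ, hz]
    have hdist1 : dist (geo hX q x u) x = dist q x - u := by
      refine geodesic_dist_right (geo_spec hX q x) ⟨hu0.le, ?_⟩
      rw [dist_comm q x, hxq]
      linarith
    rw [hz2, dist_comm q x, hxq] at hdist1
    have hdist2 : dist x (e w) = h + u := by
      rw [hP w, hw]
      rw [show sb + u * c / t - sb = u * c / t by ring]
      rw [abs_div, abs_mul, hc, abs_of_nonneg hu0.le, abs_of_nonneg (by linarith)]
      field_simp
    rw [dist_comm] at hdist2
    rw [hdist2] at hdist1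
    linarith
  -- hence q lies on the geodesic from x to τ x, and thus in T
  have hDxτ : dist x (τ x) = 2 * h + t := by
    rw [hdist, hℓzero, dist_comm q x, hxq, hqτx]
    ring
  have hτxT : τ x ∈ T := by
    rw [← hinv]
    exact Set.mem_image_of_mem τ hx
  have hqT : q ∈ T := by
    have hadd : dist x (τ x) = dist x q + dist q (τ x) := by
      rw [hDxτ, hxq, hqτx]
      ring
    have := geo_concat hX hadd
    apply hconv x hx (τ x) hτxT
    refine ⟨dist x q, ⟨dist_nonneg, ?_⟩, this⟩
    rw [hadd]
    linarith [dist_nonneg (x := q) (y := τ x)]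
  -- propagate along the axis
  have hTn : ∀ n : ℕ, e (sb + n * c) ∈ T ∧ e (sb - n * c) ∈ T := by
    intro n
    induction n with
    | zero => constructor <;> simpa using hqT
    | succ n ih =>
      constructor
      · have : e (sb + (n + 1 : ℕ) * c) = τ (e (sb + n * c)) := by
          rw [htr]
          congr 1
          push_cast
          ring
        rw [this, ← hinv]
        exact Set.mem_image_of_mem τ ih.1
      · have : e (sb - (n + 1 : ℕ) * c) = τ.symm (e (sb - n * c)) := by
          have h2 := htr (sb - (n + 1 : ℕ) * c)
          rw [show sb - (n + 1 : ℕ) * c + c = sb - n * c by push_cast; ring] at h2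
          rw [← h2, τ.symm_apply_apply]
        rw [this, ← hinv']
        exact Set.mem_image_of_mem τ.symm ih.2
  -- conclude
  intro y hy
  rw [← hrange] at hy
  obtain ⟨s, rfl⟩ := hy
  obtain ⟨n, hn⟩ := exists_nat_ge (|s - sb| / |c|)
  have habsc : 0 < |c| := abs_pos.2 hcne
  have hbound : |s - sb| ≤ n * |c| := by
    rw [div_le_iff₀ habsc] at hn
    linarith
  have hlow : sb - n * |c| ≤ s := by
    have := abs_le.1 hbound
    linarith [this.1]
  have hhigh : s ≤ sb + n * |c| := by
    have := abs_le.1 hbound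
    linarith [this.2]
  have hmemT : e (sb - n * |c|) ∈ T ∧ e (sb + n * |c|) ∈ T := by
    rcases le_or_gt 0 c with hcpos | hcneg
    · rw [abs_of_nonneg hcpos]
      exact ⟨(hTn n).2, (hTn n).1⟩
    · rw [abs_of_neg hcneg]
      constructor
      · rw [show sb - n * -c = sb + n * c by ring]
        exact (hTn n).1
      · rw [show sb + n * -c = sb - n * c by ring]
        exact (hTn n).2
  exact hconv _ hmemT.1 _ hmemT.2 (line_mem_segIm hX hiso hlow hhigh)

end RTreeAux
end Tree7

section Tree8
variable {X : Type*} [MetricSpace X]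
namespace RTreeAux
open Set

lemma conj_apply (φ τ : X ≃ᵢ X) (x : X) : (φ * τ * φ⁻¹) x = φ (τ (φ.symm x)) := rfl

lemma conj_dist (φ τ : X ≃ᵢ X) (x : X) :
    dist x ((φ * τ * φ⁻¹) x) = dist (φ.symm x) (τ (φ.symm x)) := by
  rw [conj_apply]
  calc dist x (φ (τ (φ.symm x))) = dist (φ (φ.symm x)) (φ (τ (φ.symm x))) := by
        rw [φ.apply_symm_apply]
    _ = dist (φ.symm x) (τ (φ.symm x)) := φ.isometry.dist_eq _ _

lemma conj_translationLength (φ τ : X ≃ᵢ X) :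
    translationLength (φ * τ * φ⁻¹) = translationLength τ := by
  rw [translationLength, translationLength]
  have h1 : (fun x => dist x ((φ * τ * φ⁻¹) x)) =
      (fun y => dist y (τ y)) ∘ φ.symm := by
    funext x
    exact conj_dist φ τ x
  rw [← sInf_range, ← sInf_range, h1, Function.Surjective.range_comp φ.symm.surjective]

lemma conj_core (φ τ : X ≃ᵢ X) : isomCore (φ * τ * φ⁻¹) = φ '' isomCore τ := by
  ext x
  constructor
  · intro hx
    refine ⟨φ.symm x, ?_, φ.apply_symm_apply x⟩
    show dist (φ.symm x) (τ (φ.symm x)) = translationLength τ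
    rw [← conj_dist φ τ x, ← conj_translationLength φ τ]
    exact hx
  · rintro ⟨y, hy, rfl⟩
    show dist (φ y) ((φ * τ * φ⁻¹) (φ y)) = translationLength (φ * τ * φ⁻¹)
    rw [conj_dist, conj_translationLength, φ.symm_apply_apply]
    exact hy

lemma conj_hyperbolic (φ τ : X ≃ᵢ X) (h : IsHyperbolicIsom τ) :
    IsHyperbolicIsom (φ * τ * φ⁻¹) := by
  obtain ⟨hpos, e, hiso, hrange⟩ := h
  refine ⟨by rw [conj_translationLength]; exact hpos, fun s => φ (e s), ?_, ?_⟩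
  · intro s t
    rw [φ.isometry.dist_eq, hiso]
  · rw [show (fun s => φ (e s)) = φ ∘ e from rfl, Set.range_comp, hrange, conj_core]

end RTreeAux
end Tree8


open RTreeAux

/-- If a group acts by isometries on an `ℝ`-tree and some element acts
hyperbolically, then the intersection `Γ₋` of all connected subsets containing the axis of
every hyperbolic element is the unique minimal `G`-invariant subtree: it is an invariant
nonempty connected subset contained in every invariant subtree. -/
theorem minimal_invariant_subtree {G : Type*} [Group G]
    {X : Type*} [MetricSpace X] (hX : IsRTree X)
    (σ : G →* (X ≃ᵢ X)) (hhyp : ∃ g : G, IsHyperbolicIsom (σ g)) :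
    IsConnected (⋂₀ {S : Set X | IsConnected S ∧
        ∀ g : G, IsHyperbolicIsom (σ g) → isomCore (σ g) ⊆ S}) ∧
    (∀ g : G, σ g '' (⋂₀ {S : Set X | IsConnected S ∧
        ∀ g' : G, IsHyperbolicIsom (σ g') → isomCore (σ g') ⊆ S})
      = ⋂₀ {S : Set X | IsConnected S ∧
        ∀ g' : G, IsHyperbolicIsom (σ g') → isomCore (σ g') ⊆ S}) ∧
    (∀ T : Set X, IsConnected T → (∀ g : G, σ g '' T = T) →
      ⋂₀ {S : Set X | IsConnected S ∧
        ∀ g' : G, IsHyperbolicIsom (σ g') → isomCore (σ g') ⊆ S} ⊆ T) := by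
  classical
  set F : Set (Set X) := {S : Set X | IsConnected S ∧
    ∀ g : G, IsHyperbolicIsom (σ g) → isomCore (σ g) ⊆ S} with hF
  set Γ : Set X := ⋂₀ F with hΓ
  obtain ⟨g₀, hg₀⟩ := hhyp
  -- a point of the intersection
  have hx₀ : ∃ x₀ : X, x₀ ∈ Γ := by
    obtain ⟨_, e₀, _, he₀range⟩ := id hg₀
    refine ⟨e₀ 0, Set.mem_sInter.2 fun S hS => hS.2 g₀ hg₀ ?_⟩
    rw [← he₀range]
    exact Set.mem_range_self 0
  obtain ⟨x₀, hx₀Γ⟩ := hx₀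
  -- the intersection is convex
  have hΓconv : Conv hX Γ := by
    intro a ha b hb y hy
    refine Set.mem_sInter.2 fun S hS => ?_
    exact conv_of_isPreconnected hX hS.1.isPreconnected a (Set.mem_sInter.1 ha S hS)
      b (Set.mem_sInter.1 hb S hS) hy
  have hpart1 : IsConnected Γ := isConnected_of_conv hX ⟨x₀, hx₀Γ⟩ hΓconv
  -- the family is invariant
  have hFinv : ∀ (g : G), ∀ S ∈ F, σ g '' S ∈ F := by
    intro g S hS
    constructor
    · exact hS.1.image _ (σ g).continuous.continuousOn
    · intro g' hg'
      have hkey : σ g' = σ g * σ (g⁻¹ * g' * g) * (σ g)⁻¹ := by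
        rw [← map_inv, ← map_mul, ← map_mul]
        congr 1
        group
      have hh : IsHyperbolicIsom (σ (g⁻¹ * g' * g)) := by
        have h2 : σ (g⁻¹ * g' * g) = (σ g)⁻¹ * σ g' * ((σ g)⁻¹)⁻¹ := by
          rw [inv_inv, ← map_inv, ← map_mul, ← map_mul]
        rw [h2]
        exact conj_hyperbolic _ _ hg'
      rw [hkey, conj_core]
      exact Set.image_mono (hS.2 _ hh)
  have hcancel : ∀ (g : G) (z : X), σ g (σ g⁻¹ z) = z := by
    intro g z
    rw [← IsometryEquiv.mul_apply, ← map_mul, mul_inv_cancel, map_one]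
    rfl
  have hsub : ∀ g : G, σ g '' Γ ⊆ Γ := by
    intro g
    refine Set.subset_sInter fun S hS => ?_
    have h1 : σ g⁻¹ '' S ∈ F := hFinv g⁻¹ S hS
    have h2 : Γ ⊆ σ g⁻¹ '' S := Set.sInter_subset_of_mem h1
    refine (Set.image_mono h2).trans ?_
    rw [Set.image_image]
    intro z hz
    obtain ⟨y, hy, hyz⟩ := hz
    simp only at hyz
    rw [hcancel g y] at hyz
    rwa [← hyz]

  have hpart2 : ∀ g : G, σ g '' Γ = Γ := by
    intro g
    refine le_antisymm (hsub g) ?_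
    intro y hy
    refine ⟨σ g⁻¹ y, hsub g⁻¹ ⟨y, hy, rfl⟩, hcancel g y⟩
  have hpart3 : ∀ T : Set X, IsConnected T → (∀ g : G, σ g '' T = T) → Γ ⊆ T := by
    intro T hTconn hTinv
    refine Set.sInter_subset_of_mem ?_
    refine ⟨hTconn, fun g' hg' => ?_⟩
    exact core_subset_invariant hX hg' (conv_of_isPreconnected hX hTconn.isPreconnected)
      hTconn.nonempty (hTinv g')
  exact ⟨hpart1, hpart2, hpart3⟩
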